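/- As formal power series in q, Σ_{n≥1} q^{2n}/((1-q^{2n})·(q;q)_{n-1}) = Σ_{n≥1} p^e(n) q^n, where p^e(n) is the number of partitions of n whose largest part appears an even number of times and (q;q)_{n-1} = ∏_{i=1}^{n-1}(1-q^i). -/

import Mathlib

open PowerSeries
namespace Stmt14Aux
noncomputable section
variable {α : Type*}
open Finset
open scoped Classical
universe u
variable {ι : Type u}

/-- A convenience constructor for the power series whose coefficients indicate a subset. -/
def indicatorSeries (α : Type*) [Semiring α] (s : Set ℕ) : PowerSeries α :=
  PowerSeries.mk fun n => if n ∈ s then 1 else 0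

theorem coeff_indicator (s : Set ℕ) [Semiring α] (n : ℕ) :
    coeff (R := α) n (indicatorSeries _ s) = if n ∈ s then 1 else 0 :=
  coeff_mk _ _

theorem coeff_indicator_pos (s : Set ℕ) [Semiring α] (n : ℕ) (h : n ∈ s) :
    coeff (R := α) n (indicatorSeries _ s) = 1 := by rw [coeff_indicator, if_pos h]

theorem coeff_indicator_neg (s : Set ℕ) [Semiring α] (n : ℕ) (h : n ∉ s) :
    coeff (R := α) n (indicatorSeries _ s) = 0 := by rw [coeff_indicator, if_neg h]

theorem constantCoeff_indicator (s : Set ℕ) [Semiring α] :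
    constantCoeff (R := α) (indicatorSeries _ s) = if 0 ∈ s then 1 else 0 :=
  rfl

theorem two_series (i : ℕ) [Semiring α] :
    1 + (X : PowerSeries α) ^ i.succ = indicatorSeries α {0, i.succ} := by
  ext n
  simp only [coeff_indicator, coeff_one, coeff_X_pow, Set.mem_insert_iff, Set.mem_singleton_iff,
    map_add]
  cases' n with d
  · simp [(Nat.succ_ne_zero i).symm]
  · simp [Nat.succ_ne_zero d]

theorem num_series' [Field α] (i : ℕ) :
    (1 - (X : PowerSeries α) ^ (i + 1))⁻¹ = indicatorSeries α {k | i + 1 ∣ k} := by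
  rw [PowerSeries.inv_eq_iff_mul_eq_one]
  · ext n
    cases n with
    | zero => simp [mul_sub, zero_pow, constantCoeff_indicator]
    | succ n =>
      simp only [coeff_one, if_false, mul_sub, mul_one, coeff_indicator,
        LinearMap.map_sub, reduceCtorEq]
      simp_rw [coeff_mul, coeff_X_pow, coeff_indicator, @boole_mul _ _ _ _]
      erw [@sum_ite _ _ _ _ _ (fun _ => Classical.propDecidable _), sum_ite]
      simp_rw [@filter_filter _ _ _ _ _, sum_const_zero, add_zero, sum_const, nsmul_eq_mul, mul_one,
        sub_eq_iff_eq_add, zero_add]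
      symm
      split_ifs with h
      · suffices #{a ∈ antidiagonal (n + 1) | i + 1 ∣ a.fst ∧ a.snd = i + 1} = 1 by
          simp only [Set.mem_setOf_eq]; convert congr_arg ((↑) : ℕ → α) this; norm_cast
        rw [card_eq_one]
        cases' h with p hp
        refine ⟨((i + 1) * (p - 1), i + 1), ?_⟩
        ext ⟨a₁, a₂⟩
        simp only [mem_filter, Prod.mk_inj, HasAntidiagonal.mem_antidiagonal, mem_singleton]
        constructor
        · rintro ⟨a_left, ⟨a, rfl⟩, rfl⟩
          refine ⟨?_, rfl⟩
          rw [Nat.mul_sub_left_distrib, ← hp, ← a_left, mul_one, Nat.add_sub_cancel]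
        · rintro ⟨rfl, rfl⟩
          match p with
          | 0 => rw [mul_zero] at hp; cases hp
          | p + 1 => rw [hp]; simp [mul_add]
      · suffices #{a ∈ antidiagonal (n + 1) | i + 1 ∣ a.fst ∧ a.snd = i + 1} = 0 by
          simp only [Set.mem_setOf_eq]; convert congr_arg ((↑) : ℕ → α) this; norm_cast
        rw [card_eq_zero]
        apply eq_empty_of_forall_notMem
        simp only [Prod.forall, mem_filter, not_and, HasAntidiagonal.mem_antidiagonal]
        rintro _ h₁ h₂ ⟨a, rfl⟩ rfl
        apply h
        simp [← h₂]
  · simp [zero_pow]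

def mkOdd : ℕ ↪ ℕ :=
  ⟨fun i => 2 * i + 1, fun x y h => by linarith⟩

-- The main workhorse of the partition theorem proof.
theorem partialGF_prop (α : Type*) [CommSemiring α] (n : ℕ) (s : Finset ℕ) (hs : ∀ i ∈ s, 0 < i)
    (c : ℕ → Set ℕ) (hc : ∀ i, i ∉ s → 0 ∈ c i) :
    #{p : n.Partition | (∀ j, p.parts.count j ∈ c j) ∧ ∀ j ∈ p.parts, j ∈ s} =
      coeff (R := α) n (∏ i ∈ s, indicatorSeries α ((· * i) '' c i)) := by
  simp_rw [coeff_prod, coeff_indicator, prod_boole, sum_boole]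
  apply congr_arg
  simp only [mem_univ, forall_true_left, not_and, not_forall, exists_prop,
    Set.mem_image, not_exists]
  set φ : (a : Nat.Partition n) →
    a ∈ filter (fun p ↦ (∀ (j : ℕ), Multiset.count j p.parts ∈ c j) ∧ ∀ j ∈ p.parts, j ∈ s) univ →
    ℕ →₀ ℕ := fun p _ => {
      toFun := fun i => Multiset.count i p.parts • i
      support := Finset.filter (fun i => i ≠ 0) p.parts.toFinset
      mem_support_toFun := fun a => by
        simp only [smul_eq_mul, ne_eq, mul_eq_zero, Multiset.count_eq_zero]
        rw [not_or, not_not]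
        simp only [Multiset.mem_toFinset, not_not, mem_filter] }
  refine Finset.card_bij φ ?_ ?_ ?_
  · intro a ha
    simp only [φ, not_forall, not_exists, not_and, exists_prop, mem_filter]
    rw [mem_finsuppAntidiag]
    dsimp only [ne_eq, smul_eq_mul, id_eq, eq_mpr_eq_cast, le_eq_subset, Finsupp.coe_mk]
    simp only [mem_univ, forall_true_left, not_and, not_forall, exists_prop,
      mem_filter, true_and] at ha
    refine ⟨⟨?_, fun i ↦ ?_⟩, fun i _ ↦ ⟨a.parts.count i, ha.1 i, rfl⟩⟩
    · conv_rhs => simp [← a.parts_sum]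
      rw [sum_multiset_count_of_subset _ s]
      · simp only [smul_eq_mul]
      · intro i
        simp only [Multiset.mem_toFinset, not_not, mem_filter]
        apply ha.2
    · simp only [ne_eq, Multiset.mem_toFinset, not_not, mem_filter, and_imp]
      exact fun hi _ ↦ ha.2 i hi
  · intro p₁ hp₁ p₂ hp₂ h
    apply Nat.Partition.ext
    simp only [true_and, mem_univ, mem_filter] at hp₁ hp₂
    ext i
    simp only [φ, ne_eq, Multiset.mem_toFinset, not_not, smul_eq_mul, Finsupp.mk.injEq] at h
    by_cases hi : i = 0
    · rw [hi]
      rw [Multiset.count_eq_zero_of_notMem]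
      · rw [Multiset.count_eq_zero_of_notMem]
        intro a; exact Nat.lt_irrefl 0 (hs 0 (hp₂.2 0 a))
      intro a; exact Nat.lt_irrefl 0 (hs 0 (hp₁.2 0 a))
    · rw [← mul_left_inj' hi]
      rw [funext_iff] at h
      exact h.2 i
  · simp only [φ, mem_filter, mem_finsuppAntidiag, mem_univ, exists_prop, true_and, and_assoc]
    rintro f ⟨hf, hf₃, hf₄⟩
    have hf' : f ∈ finsuppAntidiag s n := mem_finsuppAntidiag.mpr ⟨hf, hf₃⟩
    simp only [mem_finsuppAntidiag] at hf'
    refine ⟨⟨∑ i ∈ s, Multiset.replicate (f i / i) i, ?_, ?_⟩, ?_, ?_, ?_⟩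
    · intro i hi
      simp only [exists_prop, Multiset.mem_sum, mem_map, Function.Embedding.coeFn_mk] at hi
      rcases hi with ⟨t, ht, z⟩
      apply hs
      rwa [Multiset.eq_of_mem_replicate z]
    · simp_rw [Multiset.sum_sum, Multiset.sum_replicate, Nat.nsmul_eq_mul]
      rw [← hf'.1]
      refine sum_congr rfl fun i hi => Nat.div_mul_cancel ?_
      rcases hf₄ i hi with ⟨w, _, hw₂⟩
      rw [← hw₂]
      exact dvd_mul_left _ _
    · intro i
      simp_rw [Multiset.count_sum', Multiset.count_replicate, sum_ite_eq']
      split_ifs with h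
      · rcases hf₄ i h with ⟨w, hw₁, hw₂⟩
        rwa [← hw₂, Nat.mul_div_cancel _ (hs i h)]
      · exact hc _ h
    · intro i hi
      rw [Multiset.mem_sum] at hi
      rcases hi with ⟨j, hj₁, hj₂⟩
      rwa [Multiset.eq_of_mem_replicate hj₂]
    · ext i
      simp_rw [Multiset.count_sum', Multiset.count_replicate, sum_ite_eq']
      simp only [ne_eq, Multiset.mem_toFinset, not_not, smul_eq_mul, ite_mul,
        zero_mul, Finsupp.coe_mk]
      split_ifs with h
      · apply Nat.div_mul_cancel
        rcases hf₄ i h with ⟨w, _, hw₂⟩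
        apply Dvd.intro_left _ hw₂
      · apply symm
        rw [← Finsupp.notMem_support_iff]
        exact notMem_mono hf'.2 h


theorem mult_sup_mem {s : Multiset ℕ} (hs : s ≠ 0) : s.sup ∈ s := by
  induction s using Multiset.induction with
  | empty => simp at hs
  | cons a s ih =>
    rw [Multiset.sup_cons]
    rcases eq_or_ne s 0 with rfl | h
    · simp
    · rcases le_total s.sup a with h' | h'
      · simp [sup_eq_left.mpr h']
      · rw [sup_eq_right.mpr h']
        exact Multiset.mem_cons_of_mem (ih h)

theorem prod_inv' (s : Finset ℕ) (f : ℕ → PowerSeries ℚ) :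
    (∏ i ∈ s, f i)⁻¹ = ∏ i ∈ s, (f i)⁻¹ := by
  induction s using Finset.cons_induction with
  | empty => simp
  | cons a s ha ih => rw [prod_cons, prod_cons, PowerSeries.mul_inv_rev, ih, mul_comm]

/-- the family of constraint sets used in the generating-function argument -/
def cset (k : ℕ) : ℕ → Set ℕ := fun i => if i = k then {m | Even m ∧ m ≠ 0} else Set.univ

theorem geom_even (k : ℕ) (hk : 1 ≤ k) :
    indicatorSeries ℚ ((· * k) '' cset k k) =
      X ^ (2 * k) * (1 - (X : PowerSeries ℚ) ^ (2 * k))⁻¹ := by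
  have himg : ((· * k) '' cset k k) = {j | 2 * k ∣ j ∧ j ≠ 0} := by
    simp only [cset, if_pos rfl]
    ext j
    simp only [Set.mem_image, Set.mem_setOf_eq]
    constructor
    · rintro ⟨m, ⟨⟨c, rfl⟩, hm⟩, rfl⟩
      exact ⟨⟨c, by ring⟩, Nat.mul_ne_zero (by omega) (by omega)⟩
    · rintro ⟨⟨c, rfl⟩, hj⟩
      have hc : c ≠ 0 := fun h => hj (by rw [h, mul_zero])
      exact ⟨2 * c, ⟨⟨c, by ring⟩, by omega⟩, by ring⟩
  rw [himg]
  have h2k : 2 * k = (2 * k - 1) + 1 := by omega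
  rw [h2k, num_series', ← h2k]
  ext n
  rw [mul_comm ((X : PowerSeries ℚ) ^ (2 * k)), PowerSeries.coeff_mul_X_pow',
    coeff_indicator]
  have hiff : (2 * k ∣ n ∧ n ≠ 0) ↔ (2 * k ≤ n ∧ 2 * k ∣ n - 2 * k) := by
    constructor
    · rintro ⟨hd, hn0⟩
      exact ⟨Nat.le_of_dvd (Nat.pos_of_ne_zero hn0) hd, Nat.dvd_sub hd dvd_rfl⟩
    · rintro ⟨hle, hd⟩
      have h2 : 2 * k ∣ (n - 2 * k) + 2 * k := Nat.dvd_add hd dvd_rfl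
      rw [Nat.sub_add_cancel hle] at h2
      exact ⟨h2, by omega⟩
  simp only [Set.mem_setOf_eq, coeff_indicator]
  split_ifs <;> tauto
  
theorem term_eq (k : ℕ) (hk : 1 ≤ k) :
    (X : PowerSeries ℚ) ^ (2 * k) * (1 - X ^ (2 * k))⁻¹ *
        (∏ i ∈ Finset.Icc 1 (k - 1), (1 - (X : PowerSeries ℚ) ^ i))⁻¹ =
      ∏ i ∈ Finset.Icc 1 k, indicatorSeries ℚ ((· * i) '' cset k i) := by
  obtain ⟨m, rfl⟩ : ∃ m, k = m + 1 := ⟨k - 1, by omega⟩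
  rw [Finset.prod_Icc_succ_top (by omega : 1 ≤ m + 1), geom_even _ hk, mul_comm]
  congr 1
  rw [prod_inv']
  apply Finset.prod_congr (by simp) fun i hi => ?_
  simp only [Finset.mem_Icc] at hi
  have hik : i ≠ m + 1 := by omega
  have himg : ((· * i) '' cset (m + 1) i) = {j | i ∣ j} := by
    simp only [cset, if_neg hik, Set.image_univ]
    ext j
    simp only [Set.mem_range, Set.mem_setOf_eq]
    exact ⟨fun ⟨c, h⟩ => Dvd.intro_left c h, fun ⟨c, h⟩ => ⟨c, by rw [h]; ring⟩⟩
  have hi1 : i = (i - 1) + 1 := by omega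
  rw [himg, hi1, num_series', ← hi1]

theorem term_count (n k : ℕ) (hk : 1 ≤ k) :
    (PowerSeries.coeff (R := ℚ) n)
        ((X : PowerSeries ℚ) ^ (2 * k) * (1 - X ^ (2 * k))⁻¹ *
          (∏ i ∈ Finset.Icc 1 (k - 1), (1 - (X : PowerSeries ℚ) ^ i))⁻¹) =
      #{p : n.Partition | Even (p.parts.count k) ∧ p.parts.count k ≠ 0 ∧
          ∀ j ∈ p.parts, j ∈ Finset.Icc 1 k} := by
  rw [term_eq k hk]
  rw [← partialGF_prop ℚ n (Finset.Icc 1 k) (fun i hi => by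
        simp only [Finset.mem_Icc] at hi; omega)
      (cset k) (fun i hi => by
        simp only [cset]
        rw [if_neg (by rintro rfl; exact hi (Finset.mem_Icc.mpr ⟨hk, le_refl _⟩))]
        trivial)]
  congr 1
  apply congrArg
  ext p
  simp only [Finset.mem_filter, Finset.mem_univ, true_and, Set.mem_setOf_eq]
  constructor
  · rintro ⟨h1, h2⟩
    have := h1 k
    simp only [cset, if_pos rfl, Set.mem_setOf_eq] at this
    exact ⟨this.1, this.2, h2⟩
  · rintro ⟨h1, h2, h3⟩
    refine ⟨fun j => ?_, h3⟩
    simp only [cset]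
    split_ifs with h
    · subst h; exact ⟨h1, h2⟩
    · trivial

end

end Stmt14Aux

theorem stmt_14 (n : ℕ) (hn : 1 ≤ n) :
    (PowerSeries.coeff (R := ℚ) n)
      (∑ k ∈ Finset.Icc 1 n,
        PowerSeries.X ^ (2 * k) * (1 - PowerSeries.X ^ (2 * k))⁻¹ *
          (∏ i ∈ Finset.Icc 1 (k - 1), (1 - PowerSeries.X ^ i))⁻¹) =
    Nat.card {p : n.Partition // Even (p.parts.count p.parts.sup)} := by
  classical
  rw [map_sum]
  have hne : ∀ p : n.Partition, p.parts ≠ 0 := by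
    intro p hp
    have := p.parts_sum
    rw [hp] at this
    simp only [Multiset.sum_zero] at this
    omega
  have hsup_mem : ∀ p : n.Partition, p.parts.sup ∈ p.parts :=
    fun p => Stmt14Aux.mult_sup_mem (hne p)
  have hsup_le : ∀ p : n.Partition, p.parts.sup ≤ n := by
    intro p
    have h1 := hsup_mem p
    calc p.parts.sup ≤ p.parts.sum := Multiset.single_le_sum (fun _ _ => Nat.zero_le _) _ h1
      _ = n := p.parts_sum
  have hsup_pos : ∀ p : n.Partition, 1 ≤ p.parts.sup :=
    fun p => p.parts_pos (hsup_mem p)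
  rw [Nat.card_eq_fintype_card, Fintype.card_subtype]
  have key : ∀ k ∈ Finset.Icc 1 n,
      (PowerSeries.coeff (R := ℚ) n)
        (PowerSeries.X ^ (2 * k) * (1 - PowerSeries.X ^ (2 * k))⁻¹ *
          (∏ i ∈ Finset.Icc 1 (k - 1), (1 - PowerSeries.X ^ i))⁻¹) =
      (((Finset.univ : Finset n.Partition).filter
          (fun p => Even (p.parts.count p.parts.sup))).filter
        (fun p => p.parts.sup = k)).card := by
    intro k hk
    simp only [Finset.mem_Icc] at hk
    rw [Stmt14Aux.term_count n k hk.1]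
    congr 1
    apply congrArg
    ext p
    simp only [Finset.mem_filter, Finset.mem_univ, true_and, Set.mem_setOf_eq,
      Finset.mem_Icc]
    constructor
    · rintro ⟨h1, h2, h3⟩
      have hks : p.parts.sup = k := by
        apply le_antisymm
        · exact Multiset.sup_le.mpr fun b hb => (h3 b hb).2
        · exact Multiset.le_sup (Multiset.count_pos.mp (Nat.pos_of_ne_zero h2))
      exact ⟨hks ▸ h1, hks⟩
    · rintro ⟨h1, rfl⟩
      refine ⟨h1, ?_, fun j hj => ⟨p.parts_pos hj, Multiset.le_sup hj⟩⟩
      rw [Multiset.count_ne_zero]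
      exact hsup_mem p
  rw [Finset.sum_congr rfl key, ← Nat.cast_sum]
  congr 1
  rw [← Finset.card_eq_sum_card_fiberwise
    (f := fun p : n.Partition => p.parts.sup) (t := Finset.Icc 1 n)
    (s := (Finset.univ : Finset n.Partition).filter
      (fun p => Even (p.parts.count p.parts.sup)))]
  intro p hp
  exact Finset.mem_Icc.mpr ⟨hsup_pos p, hsup_le p⟩
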